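/- In a tree G with k leaves, any inclusion-minimal (or any optimal, assuming strictly positive link costs) tree augmentation solution S contains at most 2 links connecting nodes of Q_i to nodes of Q_j for each pair of paths Q_i, Q_j obtained by splitting G at its vertices of degree ≥ 3; in particular S contains O(k²) such 'inter-path' links. -/

import Mathlib

open SimpleGraph
open scoped Classical

/-- The unique path between two vertices of a tree, as a walk. -/
noncomputable def tpath {V : Type*} (G : SimpleGraph V) (hG : G.IsTree) (u v : V) : G.Walk u v :=
  (hG.existsUnique_path u v).choose

/-- The path from `a` to `b` is one of the pieces obtained by splitting the tree at its
vertices of degree at least `3`: all of its interior vertices have degree `2`. -/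
noncomputable def IsPiece {V : Type*} [Fintype V] [DecidableEq V] (G : SimpleGraph V)
    [DecidableRel G.Adj] (hG : G.IsTree) (a b : V) : Prop :=
  ∀ x ∈ (tpath G hG a b).support, x ≠ a → x ≠ b → G.degree x = 2

set_option linter.unusedSectionVars false

section Aux

variable {V : Type*} [DecidableEq V] {G : SimpleGraph V} (hG : G.IsTree)

lemma tpath_isPath (u v : V) : (tpath G hG u v).IsPath :=
  (hG.existsUnique_path u v).choose_spec.1

lemma eq_tpath {u v : V} (W : G.Walk u v) (hW : W.IsPath) : W = tpath G hG u v :=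
  (hG.existsUnique_path u v).choose_spec.2 W hW

lemma tpath_self (u : V) : tpath G hG u u = SimpleGraph.Walk.nil :=
  (eq_tpath hG SimpleGraph.Walk.nil (by simp)).symm

lemma edges_tpath_subset {u v : V} (W : G.Walk u v) :
    (tpath G hG u v).edges ⊆ W.edges := by
  rw [← eq_tpath hG W.bypass W.bypass_isPath]
  exact W.edges_bypass_subset

lemma tpath_reverse (u v : V) : tpath G hG v u = (tpath G hG u v).reverse :=
  (eq_tpath hG _ (tpath_isPath hG u v).reverse).symm

lemma mem_edges_tpath_symm {u v : V} {e : Sym2 V} (h : e ∈ (tpath G hG u v).edges) :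
    e ∈ (tpath G hG v u).edges := by
  rw [tpath_reverse hG, SimpleGraph.Walk.edges_reverse, List.mem_reverse]
  exact h

lemma tpath_takeUntil {p c u : V} (W : G.Walk p c) (hW : W.IsPath) (hu : u ∈ W.support) :
    tpath G hG p u = W.takeUntil u hu :=
  (eq_tpath hG _ (hW.takeUntil hu)).symm

lemma edges_tpath_subset_of_mem {p c u : V} (W : G.Walk p c) (hW : W.IsPath)
    (hu : u ∈ W.support) : (tpath G hG p u).edges ⊆ W.edges := by
  rw [tpath_takeUntil hG W hW hu]
  exact W.edges_takeUntil_subset hu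

lemma support_tpath_subset_of_mem {p c u : V} (W : G.Walk p c) (hW : W.IsPath)
    (hu : u ∈ W.support) : (tpath G hG p u).support ⊆ W.support := by
  rw [tpath_takeUntil hG W hW hu]
  exact W.support_takeUntil_subset hu

end Aux

section Sep
variable {V : Type*} [DecidableEq V] {G : SimpleGraph V} (hG : G.IsTree)

lemma mem_tpath_iff_sep {u v : V} {e : Sym2 V} :
    e ∈ (tpath G hG u v).edges ↔ ¬ (G.deleteEdges {e}).Reachable u v := by
  constructor
  · intro he hr
    obtain ⟨q⟩ := hr
    have hW := edges_tpath_subset hG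
      (q.map (SimpleGraph.Hom.ofLE (G.deleteEdges_le _))) he
    rw [SimpleGraph.Walk.edges_map] at hW
    obtain ⟨e', he', heq⟩ := List.mem_map.mp hW
    have hid : Sym2.map (⇑(SimpleGraph.Hom.ofLE
        (G.deleteEdges_le ({e} : Set (Sym2 V))))) e' = e' := by
      induction e' using Sym2.ind with
      | _ x y => rfl
    rw [hid] at heq
    subst heq
    have := q.edges_subset_edgeSet he'
    rw [SimpleGraph.edgeSet_deleteEdges] at this
    exact this.2 rfl
  · intro hn
    by_contra he
    exact hn ⟨(tpath G hG u v).toDeleteEdges {e}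
      (fun e' he' h => he ((Set.mem_singleton_iff.mp h) ▸ he'))⟩

lemma edges_tpath_subset_tpath {a b u v : V} (hu : u ∈ (tpath G hG a b).support)
    (hv : v ∈ (tpath G hG a b).support) :
    ∀ e ∈ (tpath G hG u v).edges, e ∈ (tpath G hG a b).edges := by
  intro e he
  rw [mem_tpath_iff_sep hG] at he
  by_cases hav : (G.deleteEdges {e}).Reachable a v
  · have hau : ¬ (G.deleteEdges {e}).Reachable a u := fun h => he (h.symm.trans hav)
    exact edges_tpath_subset_of_mem hG _ (tpath_isPath hG a b) hu
      ((mem_tpath_iff_sep hG).mpr hau)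
  · exact edges_tpath_subset_of_mem hG _ (tpath_isPath hG a b) hv
      ((mem_tpath_iff_sep hG).mpr hav)

end Sep

section Comp
variable {V : Type*} [DecidableEq V] {G : SimpleGraph V} (hG : G.IsTree)

lemma tpath_comparable {p c : V} (W : G.Walk p c) (hW : W.IsPath) {u u' : V}
    (hu : u ∈ W.support) (hu' : u' ∈ W.support) :
    (∀ e ∈ (tpath G hG p u).edges, e ∈ (tpath G hG p u').edges) ∨
    (∀ e ∈ (tpath G hG p u').edges, e ∈ (tpath G hG p u).edges) := by
  induction W with
  | nil =>
    simp only [SimpleGraph.Walk.support_nil, List.mem_singleton] at hu hu'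
    subst hu; subst hu'
    left; exact fun e he => he
  | @cons pp y cc h W ih =>
    rw [SimpleGraph.Walk.cons_isPath_iff] at hW
    by_cases hup : u = pp
    · subst hup
      left; intro e he
      rw [tpath_self hG] at he
      simp at he
    by_cases hu'p : u' = pp
    · subst hu'p
      right; intro e he
      rw [tpath_self hG] at he
      simp at he
    have hu2 : u ∈ W.support := by
      have hx := hu
      rw [SimpleGraph.Walk.support_cons, List.mem_cons] at hx
      tauto
    have hu2' : u' ∈ W.support := by
      have hx := hu'
      rw [SimpleGraph.Walk.support_cons, List.mem_cons] at hx
      tauto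
    have hrw : tpath G hG pp u = SimpleGraph.Walk.cons h (tpath G hG y u) :=
      (eq_tpath hG _ ((tpath_isPath hG y u).cons
        (fun hmem => hW.2 (support_tpath_subset_of_mem hG W hW.1 hu2 hmem)))).symm
    have hrw' : tpath G hG pp u' = SimpleGraph.Walk.cons h (tpath G hG y u') :=
      (eq_tpath hG _ ((tpath_isPath hG y u').cons
        (fun hmem => hW.2 (support_tpath_subset_of_mem hG W hW.1 hu2' hmem)))).symm
    rcases ih hW.1 hu2 hu2' with hc | hc
    · left; intro e he
      rw [hrw, SimpleGraph.Walk.edges_cons] at he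
      rw [hrw', SimpleGraph.Walk.edges_cons]
      rw [List.mem_cons] at he
      rcases he with rfl | he
      · exact List.mem_cons_self
      · exact List.mem_cons_of_mem _ (hc e he)
    · right; intro e he
      rw [hrw', SimpleGraph.Walk.edges_cons] at he
      rw [hrw, SimpleGraph.Walk.edges_cons]
      rw [List.mem_cons] at he
      rcases he with rfl | he
      · exact List.mem_cons_self
      · exact List.mem_cons_of_mem _ (hc e he)

end Comp

section Proj
variable {V : Type*} [DecidableEq V] {G : SimpleGraph V} (hG : G.IsTree)

lemma exists_proj (z a b : V) :
    ∃ p, p ∈ (tpath G hG a b).support ∧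
      ∀ e ∈ (tpath G hG z p).edges, e ∉ (tpath G hG a b).edges := by
  classical
  obtain ⟨p, hpF, hmin⟩ := (tpath G hG a b).support.toFinset.exists_min_image
    (fun x => (tpath G hG z x).length) ⟨a, List.mem_toFinset.mpr (tpath G hG a b).start_mem_support⟩
  refine ⟨p, List.mem_toFinset.mp hpF, ?_⟩
  intro e he heP
  induction e using Sym2.ind with
  | _ x y =>
    have hx : x ∈ (tpath G hG z p).support := (tpath G hG z p).fst_mem_support_of_mem_edges he
    have hy : y ∈ (tpath G hG z p).support := (tpath G hG z p).snd_mem_support_of_mem_edges he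
    have hxP : x ∈ (tpath G hG a b).support := (tpath G hG a b).fst_mem_support_of_mem_edges heP
    have hyP : y ∈ (tpath G hG a b).support := (tpath G hG a b).snd_mem_support_of_mem_edges heP
    have hxy : x ≠ y :=
      ((SimpleGraph.mem_edgeSet G).mp ((tpath G hG a b).edges_subset_edgeSet heP)).ne
    have key : ∀ w, w ∈ (tpath G hG z p).support → w ∈ (tpath G hG a b).support →
        w ≠ p → False := by
      intro w hw hwP hwp
      have hsplit := congrArg SimpleGraph.Walk.length ((tpath G hG z p).take_spec hw)
      rw [SimpleGraph.Walk.length_append] at hsplit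
      have hdrop : ((tpath G hG z p).dropUntil w hw).length ≠ 0 :=
        fun h0 => hwp (SimpleGraph.Walk.eq_of_length_eq_zero h0)
      have hlt : (tpath G hG z w).length < (tpath G hG z p).length := by
        rw [tpath_takeUntil hG _ (tpath_isPath hG z p) hw]
        omega
      have := hmin w (List.mem_toFinset.mpr hwP)
      omega
    by_cases hxp : x = p
    · exact key y hy hyP (fun h => hxy (hxp.trans h.symm))
    · exact key x hx hxP hxp

lemma exists_first_edge {s t : V} (W : G.Walk s t) (hst : s ≠ t) :
    ∃ y, s(s, y) ∈ W.edges := by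
  cases W with
  | nil => exact absurd rfl hst
  | @cons _ yy _ h q => exact ⟨yy, by simp⟩

lemma exists_edge_at {a c u : V} (W : G.Walk a c) (hu : u ∈ W.support) (hac : a ≠ c) :
    ∃ y, s(u, y) ∈ W.edges := by
  by_cases huc : u = c
  · subst huc
    have hu' : u ∈ W.reverse.support := by
      rw [SimpleGraph.Walk.support_reverse, List.mem_reverse]; exact hu
    obtain ⟨y, hy⟩ := exists_first_edge (W.reverse.dropUntil u hu') (fun h => hac h.symm)
    refine ⟨y, ?_⟩
    have := W.reverse.edges_dropUntil_subset hu' hy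
    rwa [SimpleGraph.Walk.edges_reverse, List.mem_reverse] at this
  · obtain ⟨y, hy⟩ := exists_first_edge (W.dropUntil u hu) huc
    exact ⟨y, W.edges_dropUntil_subset hu hy⟩

include hG in
lemma isPath_eq_nil {x : V} (W : G.Walk x x) (hW : W.IsPath) : W = SimpleGraph.Walk.nil := by
  have h := eq_tpath hG W hW
  rw [tpath_self hG] at h
  exact h

lemma pair_same_side {q c : V} (W : G.Walk q c) (hW : W.IsPath) {v v' : V}
    (hv : v ∈ W.support) (hv' : v' ∈ W.support) {e e' : Sym2 V}
    (h1 : e ∈ (tpath G hG q v).edges) (h2 : e ∉ (tpath G hG q v').edges)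
    (h3 : e' ∈ (tpath G hG q v').edges) (h4 : e' ∉ (tpath G hG q v).edges) : False := by
  rcases tpath_comparable hG W hW hv hv' with hc | hc
  · exact h2 (hc e h1)
  · exact h4 (hc e' h3)

lemma side_split {a b p u : V} (hp : p ∈ (tpath G hG a b).support)
    (hu : u ∈ (tpath G hG a b).support) :
    u ∈ ((tpath G hG a b).takeUntil p hp).reverse.support ∨
    u ∈ ((tpath G hG a b).dropUntil p hp).support := by
  rw [SimpleGraph.Walk.support_reverse, List.mem_reverse]
  have hsp := (tpath G hG a b).take_spec hp
  rw [← hsp, SimpleGraph.Walk.mem_support_append_iff] at hu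
  exact hu

end Proj

section Mixed
variable {V : Type*} [Fintype V] [DecidableEq V] {G : SimpleGraph V} [DecidableRel G.Adj]
  (hG : G.IsTree)

lemma mixed_core {a b p u u' : V}
    (hpiece : IsPiece G hG a b) (hp : p ∈ (tpath G hG a b).support)
    (h1 : u ∈ ((tpath G hG a b).takeUntil p hp).reverse.support)
    (h2 : u' ∈ ((tpath G hG a b).dropUntil p hp).support)
    (hup : u ≠ p) (hu'p : u' ≠ p)
    {y₃ : V} (hadj : G.Adj p y₃) (hy₃ : s(p, y₃) ∉ (tpath G hG a b).edges) : False := by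
  set P := tpath G hG a b with hPdef
  have hPpath : P.IsPath := tpath_isPath hG a b
  have hD₁path : ((P.takeUntil p hp).reverse).IsPath := (hPpath.takeUntil hp).reverse
  have hDpath : (P.dropUntil p hp).IsPath := hPpath.dropUntil hp
  -- p ≠ a
  have hpa : p ≠ a := by
    intro hpa
    have hnil := isPath_eq_nil hG ((P.takeUntil p hp).reverse.copy rfl hpa.symm)
      (by rw [SimpleGraph.Walk.isPath_copy]; exact hD₁path)
    have hsup : u ∈ ((P.takeUntil p hp).reverse.copy rfl hpa.symm).support := by
      rw [SimpleGraph.Walk.support_copy]; exact h1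
    rw [hnil] at hsup
    simp only [SimpleGraph.Walk.support_nil, List.mem_singleton] at hsup
    exact hup hsup
  have hpb : p ≠ b := by
    intro hpb
    have hnil := isPath_eq_nil hG ((P.dropUntil p hp).copy rfl hpb.symm)
      (by rw [SimpleGraph.Walk.isPath_copy]; exact hDpath)
    have hsup : u' ∈ ((P.dropUntil p hp).copy rfl hpb.symm).support := by
      rw [SimpleGraph.Walk.support_copy]; exact h2
    rw [hnil] at hsup
    simp only [SimpleGraph.Walk.support_nil, List.mem_singleton] at hsup
    exact hu'p hsup
  -- first edges
  obtain ⟨y₁, hy₁⟩ := exists_first_edge (tpath G hG p u) (Ne.symm hup)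
  obtain ⟨y₂, hy₂⟩ := exists_first_edge (tpath G hG p u') (Ne.symm hu'p)
  have hy₁T : s(p, y₁) ∈ (P.takeUntil p hp).edges := by
    have := edges_tpath_subset_of_mem hG _ hD₁path h1 hy₁
    rwa [SimpleGraph.Walk.edges_reverse, List.mem_reverse] at this
  have hy₂D : s(p, y₂) ∈ (P.dropUntil p hp).edges :=
    edges_tpath_subset_of_mem hG _ hDpath h2 hy₂
  have hsplit : (P.takeUntil p hp).edges ++ (P.dropUntil p hp).edges = P.edges := by
    rw [← SimpleGraph.Walk.edges_append, P.take_spec hp]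
  have hnodup : P.edges.Nodup :=
    SimpleGraph.Walk.edges_nodup_of_support_nodup hPpath.support_nodup
  rw [← hsplit] at hnodup
  have hdisjTD := (List.nodup_append'.mp hnodup).2.2
  have hne12 : y₁ ≠ y₂ := by
    intro h
    exact hdisjTD (h ▸ hy₁T) hy₂D
  have hy₁P : s(p, y₁) ∈ P.edges := P.edges_takeUntil_subset hp hy₁T
  have hy₂P : s(p, y₂) ∈ P.edges := P.edges_dropUntil_subset hp hy₂D
  have hne13 : y₁ ≠ y₃ := fun h => hy₃ (h ▸ hy₁P)
  have hne23 : y₂ ≠ y₃ := fun h => hy₃ (h ▸ hy₂P)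
  have hadj1 : G.Adj p y₁ := (SimpleGraph.mem_edgeSet G).mp (P.edges_subset_edgeSet hy₁P)
  have hadj2 : G.Adj p y₂ := (SimpleGraph.mem_edgeSet G).mp (P.edges_subset_edgeSet hy₂P)
  have hdeg : G.degree p = 2 := hpiece p hp hpa hpb
  have hsub : ({y₁, y₂, y₃} : Finset V) ⊆ G.neighborFinset p := by
    intro zz hz
    rw [Finset.mem_insert, Finset.mem_insert, Finset.mem_singleton] at hz
    rw [SimpleGraph.mem_neighborFinset]
    rcases hz with rfl | rfl | rfl
    · exact hadj1
    · exact hadj2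
    · exact hadj
  have hcard : ({y₁, y₂, y₃} : Finset V).card = 3 := by
    rw [Finset.card_insert_of_notMem (by simp [hne12, hne13]),
      Finset.card_insert_of_notMem (by simp [hne23]), Finset.card_singleton]
  have hle := Finset.card_le_card hsub
  rw [hcard, ← SimpleGraph.card_neighborFinset_eq_degree] at *
  omega

end Mixed

section MainPair
variable {V : Type*} [Fintype V] [DecidableEq V] {G : SimpleGraph V} [DecidableRel G.Adj]
  (hG : G.IsTree)

lemma main_pair {a b a' b' : V}
    (hpiece : IsPiece G hG a b)
    (hdisj : ∀ e ∈ (tpath G hG a b).edges, e ∉ (tpath G hG a' b').edges)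
    (hne' : a' ≠ b') {u v u' v' : V}
    (hu : u ∈ (tpath G hG a b).support) (hv : v ∈ (tpath G hG a' b').support)
    (hu' : u' ∈ (tpath G hG a b).support) (hv' : v' ∈ (tpath G hG a' b').support)
    {e e' : Sym2 V}
    (he1 : e ∈ (tpath G hG u v).edges) (he2 : e ∉ (tpath G hG u' v').edges)
    (heP : e ∈ (tpath G hG a b).edges)
    (hf1 : e' ∈ (tpath G hG u' v').edges) (hf2 : e' ∉ (tpath G hG u v).edges)
    (hfP : e' ∈ (tpath G hG a b).edges) : False := by
  obtain ⟨p, hpP, hprojv⟩ := exists_proj hG v a b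
  obtain ⟨p', hp'P, hprojv'⟩ := exists_proj hG v' a b
  have hpp' : p = p' := by
    by_contra hne
    obtain ⟨y, hy⟩ := exists_first_edge (tpath G hG p p') hne
    have hyP : s(p, y) ∈ (tpath G hG a b).edges :=
      edges_tpath_subset_tpath hG hpP hp'P _ hy
    have hyW := edges_tpath_subset hG
      ((tpath G hG p v).append ((tpath G hG v v').append (tpath G hG v' p'))) hy
    rw [SimpleGraph.Walk.edges_append, SimpleGraph.Walk.edges_append,
      List.mem_append, List.mem_append] at hyW
    rcases hyW with h | h | h
    · exact hprojv _ (mem_edges_tpath_symm hG h) hyP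
    · exact hdisj _ hyP (edges_tpath_subset_tpath hG hv hv' _ h)
    · exact hprojv' _ h hyP
  subst hpp'
  -- anchored conversions
  have hcv : e ∉ (tpath G hG v p).edges := fun h => hprojv e h heP
  have hcv' : e ∉ (tpath G hG v' p).edges := fun h => hprojv' e h heP
  have hdv : e' ∉ (tpath G hG v p).edges := fun h => hprojv e' h hfP
  have hdv' : e' ∉ (tpath G hG v' p).edges := fun h => hprojv' e' h hfP
  rw [mem_tpath_iff_sep hG] at he1 he2 hf1 hf2 hcv hcv' hdv hdv'
  rw [not_not] at he2 hcv hcv' hdv hdv' hf2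
  have hsep1 : e ∈ (tpath G hG p u).edges := (mem_tpath_iff_sep hG).mpr
    (fun h => he1 (h.symm.trans hcv.symm))
  have hsep2 : e ∉ (tpath G hG p u').edges := fun h =>
    (mem_tpath_iff_sep hG).mp h (hcv'.symm.trans he2.symm)
  have hsep3 : e' ∈ (tpath G hG p u').edges := (mem_tpath_iff_sep hG).mpr
    (fun h => hf1 (h.symm.trans hdv'.symm))
  have hsep4 : e' ∉ (tpath G hG p u).edges := fun h =>
    (mem_tpath_iff_sep hG).mp h (hdv.symm.trans hf2.symm)
  -- u,u' distinct from p
  have hup : u ≠ p := by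
    rintro rfl
    rw [tpath_self hG] at hsep1
    simp at hsep1
  have hu'p : u' ≠ p := by
    rintro rfl
    rw [tpath_self hG] at hsep3
    simp at hsep3
  -- third edge at p
  have hthird : ∃ y₃, G.Adj p y₃ ∧ s(p, y₃) ∉ (tpath G hG a b).edges := by
    by_cases hvp : v = p
    · by_cases hv'p : v' = p
      · obtain ⟨y₃, hy₃Q⟩ := exists_edge_at (tpath G hG a' b') (hvp ▸ hv) hne'
        exact ⟨y₃, (SimpleGraph.mem_edgeSet G).mp
          ((tpath G hG a' b').edges_subset_edgeSet hy₃Q),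
          fun hP => hdisj _ hP hy₃Q⟩
      · obtain ⟨y₃, hy₃⟩ := exists_first_edge (tpath G hG p v') (fun h => hv'p h.symm)
        exact ⟨y₃, (SimpleGraph.mem_edgeSet G).mp
          ((tpath G hG p v').edges_subset_edgeSet hy₃),
          fun hP => hprojv' _ (mem_edges_tpath_symm hG hy₃) hP⟩
    · obtain ⟨y₃, hy₃⟩ := exists_first_edge (tpath G hG p v) (fun h => hvp h.symm)
      exact ⟨y₃, (SimpleGraph.mem_edgeSet G).mp
        ((tpath G hG p v).edges_subset_edgeSet hy₃),
        fun hP => hprojv _ (mem_edges_tpath_symm hG hy₃) hP⟩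
  obtain ⟨y₃, hadj3, hy₃P⟩ := hthird
  rcases side_split hG hpP hu with s1 | s1 <;> rcases side_split hG hpP hu' with s2 | s2
  · exact pair_same_side hG _ ((tpath_isPath hG a b).takeUntil hpP).reverse s1 s2
      hsep1 hsep2 hsep3 hsep4
  · exact mixed_core hG hpiece hpP s1 s2 hup hu'p hadj3 hy₃P
  · exact mixed_core hG hpiece hpP s2 s1 hu'p hup hadj3 hy₃P
  · exact pair_same_side hG _ ((tpath_isPath hG a b).dropUntil hpP) s1 s2
      hsep1 hsep2 hsep3 hsep4
end MainPair

section Triple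
variable {V : Type*} [Fintype V] [DecidableEq V] {G : SimpleGraph V} [DecidableRel G.Adj]
  (hG : G.IsTree)

omit [Fintype V] [DecidableRel G.Adj] in
lemma nil_triple {a b u : V} {v₁ v₂ v₃ : V}
    (hv₁ : v₁ ∈ (tpath G hG a b).support) (hv₂ : v₂ ∈ (tpath G hG a b).support)
    (hv₃ : v₃ ∈ (tpath G hG a b).support)
    {e₁ e₂ e₃ : Sym2 V}
    (h11 : e₁ ∈ (tpath G hG u v₁).edges) (h12 : e₁ ∉ (tpath G hG u v₂).edges)
    (h13 : e₁ ∉ (tpath G hG u v₃).edges)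
    (h22 : e₂ ∈ (tpath G hG u v₂).edges) (h21 : e₂ ∉ (tpath G hG u v₁).edges)
    (h23 : e₂ ∉ (tpath G hG u v₃).edges)
    (h33 : e₃ ∈ (tpath G hG u v₃).edges) (h31 : e₃ ∉ (tpath G hG u v₁).edges)
    (h32 : e₃ ∉ (tpath G hG u v₂).edges)
    (hQ1 : e₁ ∈ (tpath G hG a b).edges) (hQ2 : e₂ ∈ (tpath G hG a b).edges)
    (hQ3 : e₃ ∈ (tpath G hG a b).edges) : False := by
  obtain ⟨q, hqQ, hproj⟩ := exists_proj hG u a b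
  have conv : ∀ {vv : V} {ee : Sym2 V}, ee ∈ (tpath G hG a b).edges →
      (ee ∈ (tpath G hG u vv).edges ↔ ee ∈ (tpath G hG q vv).edges) := by
    intro vv ee heQ
    have hr : (G.deleteEdges {ee}).Reachable u q := by
      by_contra h
      exact hproj ee ((mem_tpath_iff_sep hG).mpr h) heQ
    rw [mem_tpath_iff_sep hG, mem_tpath_iff_sep hG]
    exact not_congr ⟨fun h => hr.symm.trans h, fun h => hr.trans h⟩
  have k11 : e₁ ∈ (tpath G hG q v₁).edges := (conv hQ1).mp h11
  have k12 : e₁ ∉ (tpath G hG q v₂).edges := fun h => h12 ((conv hQ1).mpr h)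
  have k13 : e₁ ∉ (tpath G hG q v₃).edges := fun h => h13 ((conv hQ1).mpr h)
  have k22 : e₂ ∈ (tpath G hG q v₂).edges := (conv hQ2).mp h22
  have k21 : e₂ ∉ (tpath G hG q v₁).edges := fun h => h21 ((conv hQ2).mpr h)
  have k23 : e₂ ∉ (tpath G hG q v₃).edges := fun h => h23 ((conv hQ2).mpr h)
  have k33 : e₃ ∈ (tpath G hG q v₃).edges := (conv hQ3).mp h33
  have k31 : e₃ ∉ (tpath G hG q v₁).edges := fun h => h31 ((conv hQ3).mpr h)
  have k32 : e₃ ∉ (tpath G hG q v₂).edges := fun h => h32 ((conv hQ3).mpr h)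
  have hT : ((tpath G hG a b).takeUntil q hqQ).reverse.IsPath :=
    ((tpath_isPath hG a b).takeUntil hqQ).reverse
  have hD : ((tpath G hG a b).dropUntil q hqQ).IsPath := (tpath_isPath hG a b).dropUntil hqQ
  rcases side_split hG hqQ hv₁ with s1 | s1 <;> rcases side_split hG hqQ hv₂ with s2 | s2 <;>
    rcases side_split hG hqQ hv₃ with s3 | s3
  · exact pair_same_side hG _ hT s1 s2 k11 k12 k22 k21
  · exact pair_same_side hG _ hT s1 s2 k11 k12 k22 k21
  · exact pair_same_side hG _ hT s1 s3 k11 k13 k33 k31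
  · exact pair_same_side hG _ hD s2 s3 k22 k23 k33 k32
  · exact pair_same_side hG _ hT s2 s3 k22 k23 k33 k32
  · exact pair_same_side hG _ hD s1 s3 k11 k13 k33 k31
  · exact pair_same_side hG _ hD s1 s2 k11 k12 k22 k21
  · exact pair_same_side hG _ hD s1 s2 k11 k12 k22 k21
end Triple

section ClaimA
variable {V : Type*} [DecidableEq V] {G : SimpleGraph V} (hG : G.IsTree)

lemma mem_piece_of_private {u v u' v' : V} {e : Sym2 V}
    (he : e ∈ (tpath G hG u v).edges) (hne : e ∉ (tpath G hG u' v').edges) :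
    e ∈ (tpath G hG u u').edges ∨ e ∈ (tpath G hG v' v).edges := by
  have hmem := edges_tpath_subset hG
    ((tpath G hG u u').append ((tpath G hG u' v').append (tpath G hG v' v))) he
  rw [SimpleGraph.Walk.edges_append, SimpleGraph.Walk.edges_append,
    List.mem_append, List.mem_append] at hmem
  tauto
end ClaimA

section MainTriple
variable {V : Type*} [Fintype V] [DecidableEq V] {G : SimpleGraph V} [DecidableRel G.Adj]
  (hG : G.IsTree)

lemma main_triple {a₁ b₁ a₂ b₂ : V}
    (h₁ : IsPiece G hG a₁ b₁) (h₂ : IsPiece G hG a₂ b₂)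
    (hdisj : ∀ e ∈ (tpath G hG a₁ b₁).edges, e ∉ (tpath G hG a₂ b₂).edges)
    {u₁ v₁ u₂ v₂ u₃ v₃ : V}
    (hu₁ : u₁ ∈ (tpath G hG a₁ b₁).support) (hv₁ : v₁ ∈ (tpath G hG a₂ b₂).support)
    (hu₂ : u₂ ∈ (tpath G hG a₁ b₁).support) (hv₂ : v₂ ∈ (tpath G hG a₂ b₂).support)
    (hu₃ : u₃ ∈ (tpath G hG a₁ b₁).support) (hv₃ : v₃ ∈ (tpath G hG a₂ b₂).support)
    {e₁ e₂ e₃ : Sym2 V}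
    (h11 : e₁ ∈ (tpath G hG u₁ v₁).edges) (h12 : e₁ ∉ (tpath G hG u₂ v₂).edges)
    (h13 : e₁ ∉ (tpath G hG u₃ v₃).edges)
    (h22 : e₂ ∈ (tpath G hG u₂ v₂).edges) (h21 : e₂ ∉ (tpath G hG u₁ v₁).edges)
    (h23 : e₂ ∉ (tpath G hG u₃ v₃).edges)
    (h33 : e₃ ∈ (tpath G hG u₃ v₃).edges) (h31 : e₃ ∉ (tpath G hG u₁ v₁).edges)
    (h32 : e₃ ∉ (tpath G hG u₂ v₂).edges) : False := by
  have hdisj' : ∀ e ∈ (tpath G hG a₂ b₂).edges, e ∉ (tpath G hG a₁ b₁).edges :=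
    fun e hQ hP => hdisj e hP hQ
  -- locate each private edge on one of the two pieces
  have hloc : ∀ {u v u' v' : V} {e : Sym2 V},
      u ∈ (tpath G hG a₁ b₁).support → u' ∈ (tpath G hG a₁ b₁).support →
      v ∈ (tpath G hG a₂ b₂).support → v' ∈ (tpath G hG a₂ b₂).support →
      e ∈ (tpath G hG u v).edges → e ∉ (tpath G hG u' v').edges →
      e ∈ (tpath G hG a₁ b₁).edges ∨ e ∈ (tpath G hG a₂ b₂).edges := by
    intro u v u' v' e hu hu' hv hv' he hne
    rcases mem_piece_of_private hG he hne with h | h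
    · exact Or.inl (edges_tpath_subset_tpath hG hu hu' _ h)
    · exact Or.inr (edges_tpath_subset_tpath hG hv' hv _ h)
  have hloc1 := hloc hu₁ hu₂ hv₁ hv₂ h11 h12
  have hloc2 := hloc hu₂ hu₁ hv₂ hv₁ h22 h21
  have hloc3 := hloc hu₃ hu₁ hv₃ hv₁ h33 h31
  by_cases hab1 : a₁ = b₁
  · -- P is trivial
    subst hab1
    have hPnil : tpath G hG a₁ a₁ = SimpleGraph.Walk.nil := tpath_self hG a₁
    have hPedges : (tpath G hG a₁ a₁).edges = [] := by rw [hPnil]; rfl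
    have hueq : ∀ {w : V}, w ∈ (tpath G hG a₁ a₁).support → w = a₁ := by
      intro w hw; rw [hPnil] at hw; simpa using hw
    have hu₁' := hueq hu₁; have hu₂' := hueq hu₂; have hu₃' := hueq hu₃
    subst hu₁'; subst hu₂'; subst hu₃'
    have hQ1 : e₁ ∈ (tpath G hG a₂ b₂).edges := by
      rcases hloc1 with h | h
      · rw [hPedges] at h; simp at h
      · exact h
    have hQ2 : e₂ ∈ (tpath G hG a₂ b₂).edges := by
      rcases hloc2 with h | h
      · rw [hPedges] at h; simp at h
      · exact h
    have hQ3 : e₃ ∈ (tpath G hG a₂ b₂).edges := by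
      rcases hloc3 with h | h
      · rw [hPedges] at h; simp at h
      · exact h
    exact nil_triple hG hv₁ hv₂ hv₃ h11 h12 h13 h22 h21 h23 h33 h31 h32 hQ1 hQ2 hQ3
  by_cases hab2 : a₂ = b₂
  · subst hab2
    have hQnil : tpath G hG a₂ a₂ = SimpleGraph.Walk.nil := tpath_self hG a₂
    have hQedges : (tpath G hG a₂ a₂).edges = [] := by rw [hQnil]; rfl
    have hveq : ∀ {w : V}, w ∈ (tpath G hG a₂ a₂).support → w = a₂ := by
      intro w hw; rw [hQnil] at hw; simpa using hw
    have hv₁' := hveq hv₁; have hv₂' := hveq hv₂; have hv₃' := hveq hv₃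
    subst hv₁'; subst hv₂'; subst hv₃'
    have hP1 : e₁ ∈ (tpath G hG a₁ b₁).edges := by
      rcases hloc1 with h | h
      · exact h
      · rw [hQedges] at h; simp at h
    have hP2 : e₂ ∈ (tpath G hG a₁ b₁).edges := by
      rcases hloc2 with h | h
      · exact h
      · rw [hQedges] at h; simp at h
    have hP3 : e₃ ∈ (tpath G hG a₁ b₁).edges := by
      rcases hloc3 with h | h
      · exact h
      · rw [hQedges] at h; simp at h
    exact nil_triple hG hu₁ hu₂ hu₃
      (mem_edges_tpath_symm hG h11) (fun h => h12 (mem_edges_tpath_symm hG h))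
      (fun h => h13 (mem_edges_tpath_symm hG h))
      (mem_edges_tpath_symm hG h22) (fun h => h21 (mem_edges_tpath_symm hG h))
      (fun h => h23 (mem_edges_tpath_symm hG h))
      (mem_edges_tpath_symm hG h33) (fun h => h31 (mem_edges_tpath_symm hG h))
      (fun h => h32 (mem_edges_tpath_symm hG h)) hP1 hP2 hP3
  -- both pieces nontrivial: pigeonhole on the location of the three private edges
  rcases hloc1 with l1 | l1 <;> rcases hloc2 with l2 | l2 <;> rcases hloc3 with l3 | l3
  · exact main_pair hG h₁ hdisj hab2 hu₁ hv₁ hu₂ hv₂ h11 h12 l1 h22 h21 l2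
  · exact main_pair hG h₁ hdisj hab2 hu₁ hv₁ hu₂ hv₂ h11 h12 l1 h22 h21 l2
  · exact main_pair hG h₁ hdisj hab2 hu₁ hv₁ hu₃ hv₃ h11 h13 l1 h33 h31 l3
  · exact main_pair hG h₂ hdisj' hab1 hv₂ hu₂ hv₃ hu₃
      (mem_edges_tpath_symm hG h22) (fun h => h23 (mem_edges_tpath_symm hG h)) l2
      (mem_edges_tpath_symm hG h33) (fun h => h32 (mem_edges_tpath_symm hG h)) l3
  · exact main_pair hG h₁ hdisj hab2 hu₂ hv₂ hu₃ hv₃ h22 h23 l2 h33 h32 l3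
  · exact main_pair hG h₂ hdisj' hab1 hv₁ hu₁ hv₃ hu₃
      (mem_edges_tpath_symm hG h11) (fun h => h13 (mem_edges_tpath_symm hG h)) l1
      (mem_edges_tpath_symm hG h33) (fun h => h31 (mem_edges_tpath_symm hG h)) l3
  · exact main_pair hG h₂ hdisj' hab1 hv₁ hu₁ hv₂ hu₂
      (mem_edges_tpath_symm hG h11) (fun h => h12 (mem_edges_tpath_symm hG h)) l1
      (mem_edges_tpath_symm hG h22) (fun h => h21 (mem_edges_tpath_symm hG h)) l2
  · exact main_pair hG h₂ hdisj' hab1 hv₁ hu₁ hv₂ hu₂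
      (mem_edges_tpath_symm hG h11) (fun h => h12 (mem_edges_tpath_symm hG h)) l1
      (mem_edges_tpath_symm hG h22) (fun h => h21 (mem_edges_tpath_symm hG h)) l2
end MainTriple

/-- In a tree `G`, any inclusion-minimal augmentation solution `S`
contains at most `2` links connecting nodes of one path piece `Q_i` (obtained by
splitting `G` at its vertices of degree at least `3`) to nodes of another,
edge-disjoint, path piece `Q_j`. -/
theorem minimal_solution_interpath_links {V : Type*} [Fintype V] [DecidableEq V]
    (G : SimpleGraph V) [DecidableRel G.Adj] (hG : G.IsTree)
    (L : Finset (V × V)) (S : Finset (V × V)) (hSL : S ⊆ L)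
    (hfeas : ∀ e ∈ G.edgeSet, ∃ ℓ ∈ S, e ∈ (tpath G hG ℓ.1 ℓ.2).edges)
    (hmin : ∀ ℓ ∈ S, ¬ ∀ e ∈ G.edgeSet, ∃ ℓ' ∈ S.erase ℓ, e ∈ (tpath G hG ℓ'.1 ℓ'.2).edges)
    (a₁ b₁ a₂ b₂ : V) (h₁ : IsPiece G hG a₁ b₁) (h₂ : IsPiece G hG a₂ b₂)
    (hdisj : ∀ e ∈ (tpath G hG a₁ b₁).edges, e ∉ (tpath G hG a₂ b₂).edges) :
    (S.filter (fun ℓ =>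
      (ℓ.1 ∈ (tpath G hG a₁ b₁).support ∧ ℓ.2 ∈ (tpath G hG a₂ b₂).support) ∨
      (ℓ.2 ∈ (tpath G hG a₁ b₁).support ∧ ℓ.1 ∈ (tpath G hG a₂ b₂).support))).card ≤ 2 := by
  by_contra hcard
  push_neg at hcard
  rw [Finset.two_lt_card] at hcard
  obtain ⟨x, hx, y, hy, z, hz, hxy, hxz, hyz⟩ := hcard
  rw [Finset.mem_filter] at hx hy hz
  -- private edges from minimality
  have key : ∀ ℓ ∈ S, ∃ e, e ∈ (tpath G hG ℓ.1 ℓ.2).edges ∧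
      ∀ ℓ' ∈ S, ℓ' ≠ ℓ → e ∉ (tpath G hG ℓ'.1 ℓ'.2).edges := by
    intro ℓ hℓ
    have h := hmin ℓ hℓ
    push_neg at h
    obtain ⟨e, heG, hcov⟩ := h
    obtain ⟨ℓ'', hℓ''S, hℓ''cov⟩ := hfeas e heG
    have hℓeq : ℓ'' = ℓ := by
      by_contra hne
      exact hcov ℓ'' (Finset.mem_erase.mpr ⟨hne, hℓ''S⟩) hℓ''cov
    exact ⟨e, hℓeq ▸ hℓ''cov, fun ℓ' hS hne => hcov ℓ' (Finset.mem_erase.mpr ⟨hne, hS⟩)⟩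
  obtain ⟨ex, hex, hexpriv⟩ := key x hx.1
  obtain ⟨ey, hey, heypriv⟩ := key y hy.1
  obtain ⟨ez, hez, hezpriv⟩ := key z hz.1
  -- normalize orientations
  have norm : ∀ ℓ : V × V,
      ((ℓ.1 ∈ (tpath G hG a₁ b₁).support ∧ ℓ.2 ∈ (tpath G hG a₂ b₂).support) ∨
       (ℓ.2 ∈ (tpath G hG a₁ b₁).support ∧ ℓ.1 ∈ (tpath G hG a₂ b₂).support)) →
      ∃ w : V × V, w.1 ∈ (tpath G hG a₁ b₁).support ∧ w.2 ∈ (tpath G hG a₂ b₂).support ∧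
        ∀ ee : Sym2 V, ee ∈ (tpath G hG ℓ.1 ℓ.2).edges ↔ ee ∈ (tpath G hG w.1 w.2).edges := by
    rintro ℓ (⟨hh1, hh2⟩ | ⟨hh1, hh2⟩)
    · exact ⟨(ℓ.1, ℓ.2), hh1, hh2, fun ee => Iff.rfl⟩
    · exact ⟨(ℓ.2, ℓ.1), hh1, hh2,
        fun ee => ⟨fun h => mem_edges_tpath_symm hG h, fun h => mem_edges_tpath_symm hG h⟩⟩
  obtain ⟨wx, hwx1, hwx2, hiffx⟩ := norm x hx.2
  obtain ⟨wy, hwy1, hwy2, hiffy⟩ := norm y hy.2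
  obtain ⟨wz, hwz1, hwz2, hiffz⟩ := norm z hz.2
  exact main_triple hG h₁ h₂ hdisj hwx1 hwx2 hwy1 hwy2 hwz1 hwz2
    ((hiffx _).mp hex)
    (fun h => hexpriv y hy.1 hxy.symm ((hiffy _).mpr h))
    (fun h => hexpriv z hz.1 hxz.symm ((hiffz _).mpr h))
    ((hiffy _).mp hey)
    (fun h => heypriv x hx.1 hxy ((hiffx _).mpr h))
    (fun h => heypriv z hz.1 hyz.symm ((hiffz _).mpr h))
    ((hiffz _).mp hez)
    (fun h => hezpriv x hx.1 hxz ((hiffx _).mpr h))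
    (fun h => hezpriv y hy.1 hyz ((hiffy _).mpr h))
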